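/- Assume k ≤ n − 3 and let λ : {1,…,n} × {0,1} → F be injective. Let 𝓕, 𝓡 ⊆ {1,…,n} be disjoint sets with |𝓕| = 2 and |𝓡| = k + 1. Then there exist: first-round download functions φ_{u,j} : N → M for each u ∈ 𝓕 and j ∈ 𝓡; exchange functions ψ_{u,v} : (𝓡 → M) → M for each ordered pair of distinct u, v ∈ 𝓕; and recovery functions ρ_u : (𝓡 → M) × ((𝓕∖{u}) → M) → N for each u ∈ 𝓕; such that for every codeword c of C(n,k,2,3,λ) and every u ∈ 𝓕, ρ_u( (j ↦ φ_{u,j}(c_j)), (v ↦ ψ_{v,u}(j ↦ φ_{v,j}(c_j))) ) = c_u, where c_i ∈ N denotes the i-th node (b,a) ↦ c(i,b,a). Since each of the 2(k+1) first-round messages and each of the 2 exchange messages consists of 2^n symbols of F, the total repair bandwidth is 2(k+2)·2^n symbols, which meets the cooperative cut-set bound |𝓕|(|𝓡|+|𝓕|−1)·l / (|𝓕|+|𝓡|−k) with equality for node size l = 3·2^n. -/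
import Mathlib


/-- The code `C(n,k,s,m,λ)`: an array `c : {1,…,n} × {1,…,m} × {0,…,s-1}^n → F`
(node index `i : Fin n`, block index `b ∈ {1,…,m}` as a natural number,
`a : Fin n → Fin s`) satisfying the parity-check equations
`∑_{i=1}^n λ(i,a_i)^t · c(i,b,a) = 0` for all `t ∈ {0,…,n-k-1}`,
`b ∈ {1,…,m}` and `a ∈ {0,…,s-1}^n`. -/
def IsCodeword {F : Type*} [Field F] {n : ℕ} (k s m : ℕ)
    (lam : Fin n → Fin s → F) (c : Fin n → ℕ → (Fin n → Fin s) → F) : Prop :=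
  ∀ t < n - k, ∀ b ∈ Finset.Icc 1 m, ∀ a : Fin n → Fin s,
    ∑ i, lam i (a i) ^ t * c i b a = 0

namespace Stmt5

open Finset Function Polynomial

variable {F : Type*} [Field F]

/-- Generalized Vandermonde vanishing: a vector supported on at most `r`
coordinates (inside `K`) that is orthogonal to the first `r` powers of
distinct points is zero. -/
lemma core {ι : Type*} [Fintype ι] [DecidableEq ι] (pt : ι → F)
    (hpt : Function.Injective pt) (r : ℕ) (Z : ι → F) (K : Finset ι)
    (hK : K.card ≤ r)
    (hch : ∀ t < r, ∑ i, pt i ^ t * Z i = 0)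
    (hsupp : ∀ i ∉ K, Z i = 0) : ∀ i, Z i = 0 := by
  intro i₀
  by_cases h0 : i₀ ∈ K
  swap
  · exact hsupp _ h0
  set q : F[X] := ∏ κ ∈ K.erase i₀, (X - C (pt κ)) with hq
  have hmon : ∀ κ ∈ K.erase i₀, (X - C (pt κ)).Monic := fun κ _ => monic_X_sub_C _
  have hdeg : q.natDegree = (K.erase i₀).card := by
    rw [hq, natDegree_prod_of_monic _ _ hmon]
    simp
  have hdeg' : q.natDegree < r := by
    have h1 : 1 ≤ K.card := card_pos.mpr ⟨i₀, h0⟩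
    rw [hdeg, card_erase_of_mem h0]
    omega
  have key : ∑ i, q.eval (pt i) * Z i = 0 := by
    have h2 : ∀ i : ι, q.eval (pt i) * Z i
        = ∑ t ∈ range r, q.coeff t * (pt i ^ t * Z i) := by
      intro i
      rw [eval_eq_sum_range' hdeg', sum_mul]
      exact sum_congr rfl fun t _ => by ring
    rw [Finset.sum_congr rfl fun i _ => h2 i, Finset.sum_comm]
    refine Finset.sum_eq_zero fun t ht => ?_
    rw [← Finset.mul_sum, hch t (mem_range.mp ht), mul_zero]
  have hsingle : ∑ i, q.eval (pt i) * Z i = q.eval (pt i₀) * Z i₀ := by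
    apply Finset.sum_eq_single i₀
    · intro i _ hne
      by_cases hiK : i ∈ K
      · have hz : q.eval (pt i) = 0 := by
          rw [hq, eval_prod]
          exact Finset.prod_eq_zero (Finset.mem_erase.mpr ⟨hne, hiK⟩) (by simp)
        rw [hz, zero_mul]
      · rw [hsupp _ hiK, mul_zero]
    · intro h; exact absurd (mem_univ i₀) h
  have hne0 : q.eval (pt i₀) ≠ 0 := by
    rw [hq, eval_prod]
    refine Finset.prod_ne_zero_iff.mpr fun κ hκ => ?_
    have hne : pt i₀ ≠ pt κ := fun h => (Finset.mem_erase.mp hκ).1 (hpt h).symm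
    simpa [sub_eq_zero] using hne
  rcases mul_eq_zero.mp (hsingle ▸ key) with h | h
  · exact absurd h hne0
  · exact h

/-- The value of a "repair object" (a mixed, `a_x`-aggregated linear
combination of codeword coordinates) at a node with column `cj`. -/
def objValue {n : ℕ} (ω : ℕ → Fin 2 → F) (x : Fin n) (base : Fin n → Fin 2)
    (cj : ℕ → (Fin n → Fin 2) → F) : F :=
  ∑ ε : Fin 2, ∑ b ∈ Finset.Icc 1 3, ω b ε * cj b (Function.update base x ε)

lemma objValue_sub {n : ℕ} (ω : ℕ → Fin 2 → F) (x : Fin n) (base : Fin n → Fin 2)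
    (f h : ℕ → (Fin n → Fin 2) → F) :
    objValue ω x base (fun b a => f b a - h b a)
      = objValue ω x base f - objValue ω x base h := by
  simp [objValue, mul_sub, Finset.sum_sub_distrib]

lemma objValue_update_self {n : ℕ} (ω : ℕ → Fin 2 → F) (x : Fin n)
    (base : Fin n → Fin 2) (s : Fin 2) (cj : ℕ → (Fin n → Fin 2) → F) :
    objValue ω x (Function.update base x s) cj = objValue ω x base cj := by
  simp [objValue, Function.update_idem]

/-- Main linear-algebra step: if all helper coordinates of a repair object
vanish, then all its (extended) coordinates vanish. -/
lemma obj {n k : ℕ} (lam : Fin n → Fin 2 → F)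
    (hlam : Function.Injective fun p : Fin n × Fin 2 => lam p.1 p.2)
    (Rs : Finset (Fin n)) (hRcard : Rs.card = k + 1) (hkn : k + 3 ≤ n)
    (d : Fin n → ℕ → (Fin n → Fin 2) → F) (hd : IsCodeword k 2 3 lam d)
    (x : Fin n) (hx : x ∉ Rs) (base : Fin n → Fin 2) (ω : ℕ → Fin 2 → F)
    (hzero : ∀ j ∈ Rs, objValue ω x base (d j) = 0) :
    (∀ ε : Fin 2,
      (∑ b ∈ Finset.Icc 1 3, ω b ε * d x b (Function.update base x ε)) = 0)
    ∧ (∀ i, i ≠ x → objValue ω x base (d i) = 0) := by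
  classical
  set A : Fin 2 → (Fin n → Fin 2) := fun ε => Function.update base x ε with hA
  set Z : Fin n × Fin 2 → F := fun p =>
    if p.1 = x then ∑ b ∈ Finset.Icc 1 3, ω b p.2 * d x b (A p.2)
    else if p.2 = base p.1 then objValue ω x base (d p.1) else 0 with hZ
  set K : Finset (Fin n × Fin 2) :=
    insert (x, 0) (insert (x, 1)
      ((insert x Rs)ᶜ.image (fun i => (i, base i)))) with hKdef
  have hxcard : (insert x Rs).card = k + 2 := by
    rw [card_insert_of_notMem hx, hRcard]
  have hKcard : K.card ≤ n - k := by
    have h1 : ((insert x Rs)ᶜ.image (fun i => (i, base i))).card ≤ n - (k + 2) := by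
      refine le_trans card_image_le ?_
      rw [card_compl, hxcard, Fintype.card_fin]
    have h2 : K.card ≤ ((insert x Rs)ᶜ.image (fun i => (i, base i))).card + 2 := by
      refine le_trans (card_insert_le _ _) ?_
      have := card_insert_le ((x, 1) : Fin n × Fin 2)
        ((insert x Rs)ᶜ.image (fun i => (i, base i)))
      omega
    omega
  have hch : ∀ t < n - k, ∑ p : Fin n × Fin 2, lam p.1 p.2 ^ t * Z p = 0 := by
    intro t ht
    have hstep : ∑ p : Fin n × Fin 2, lam p.1 p.2 ^ t * Z p
        = ∑ ε : Fin 2, ∑ i, lam i (A ε i) ^ t *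
            (∑ b ∈ Finset.Icc 1 3, ω b ε * d i b (A ε)) := by
      rw [Fintype.sum_prod_type]
      rw [show (∑ ε : Fin 2, ∑ i, lam i (A ε i) ^ t *
            (∑ b ∈ Finset.Icc 1 3, ω b ε * d i b (A ε)))
          = ∑ i, ∑ ε : Fin 2, lam i (A ε i) ^ t *
            (∑ b ∈ Finset.Icc 1 3, ω b ε * d i b (A ε)) from Finset.sum_comm]
      refine Finset.sum_congr rfl fun i _ => ?_
      by_cases hix : i = x
      · subst hix
        refine Finset.sum_congr rfl fun ε _ => ?_
        rw [hZ]
        simp [hA]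
      · have hl : ∀ ε : Fin 2, A ε i = base i := fun ε => Function.update_of_ne hix _ _
        have hlhs : ∑ ε : Fin 2, lam i ε ^ t * Z (i, ε)
            = lam i (base i) ^ t * objValue ω x base (d i) := by
          rw [hZ]
          simp only [hix, if_false]
          rw [show (∑ ε : Fin 2, lam i ε ^ t *
              (if ε = base i then objValue ω x base (d i) else 0))
            = ∑ ε : Fin 2, (if ε = base i
                then lam i ε ^ t * objValue ω x base (d i) else 0) from
            Finset.sum_congr rfl fun ε _ => by split <;> simp]
          rw [Finset.sum_ite_eq' Finset.univ (base i)
            (fun ε => lam i ε ^ t * objValue ω x base (d i))]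
          simp
        rw [hlhs]
        have hrhs : ∑ ε : Fin 2, lam i (A ε i) ^ t *
              (∑ b ∈ Finset.Icc 1 3, ω b ε * d i b (A ε))
            = lam i (base i) ^ t * objValue ω x base (d i) := by
          rw [objValue, Finset.mul_sum]
          refine Finset.sum_congr rfl fun ε _ => ?_
          rw [hl ε]
        rw [hrhs]
    rw [hstep]
    refine Finset.sum_eq_zero fun ε _ => ?_
    calc ∑ i, lam i (A ε i) ^ t * ∑ b ∈ Finset.Icc 1 3, ω b ε * d i b (A ε)
        = ∑ i, ∑ b ∈ Finset.Icc 1 3,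
            ω b ε * (lam i (A ε i) ^ t * d i b (A ε)) := by
          refine Finset.sum_congr rfl fun i _ => ?_
          rw [Finset.mul_sum]
          exact Finset.sum_congr rfl fun b _ => by ring
      _ = ∑ b ∈ Finset.Icc 1 3, ∑ i,
            ω b ε * (lam i (A ε i) ^ t * d i b (A ε)) := Finset.sum_comm
      _ = 0 := by
          refine Finset.sum_eq_zero fun b hb => ?_
          rw [← Finset.mul_sum, hd t ht b hb (A ε), mul_zero]
  have hsupp : ∀ p ∉ K, Z p = 0 := by
    rintro ⟨i, ε⟩ hp
    have hix : i ≠ x := by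
      rintro rfl
      apply hp
      have h01 : ε = 0 ∨ ε = 1 := by
        rcases ε with ⟨v, hv⟩
        interval_cases v
        · exact Or.inl rfl
        · exact Or.inr rfl
      rcases h01 with rfl | rfl
      · exact mem_insert_self _ _
      · exact mem_insert_of_mem (mem_insert_self _ _)
    rw [hZ]
    simp only [hix, if_false]
    by_cases hεb : ε = base i
    swap
    · simp [hεb]
    subst hεb
    have hiRs : i ∈ Rs := by
      by_contra hiRs
      apply hp
      refine mem_insert_of_mem (mem_insert_of_mem ?_)
      exact mem_image.mpr ⟨i, by simp [mem_compl, mem_insert, hix, hiRs], rfl⟩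
    simp [hzero i hiRs]
  have hall := core (fun p : Fin n × Fin 2 => lam p.1 p.2) hlam (n - k) Z K hKcard hch hsupp
  constructor
  · intro ε
    have := hall (x, ε)
    rw [hZ] at this
    simpa [hA] using this
  · intro i hix
    have := hall (i, base i)
    rw [hZ] at this
    simpa [hix] using this

lemma fin2cases (ε : Fin 2) : ε = 0 ∨ ε = 1 := by
  rcases ε with ⟨v, hv⟩
  interval_cases v
  · exact Or.inl rfl
  · exact Or.inr rfl

lemma sumIcc13 (f : ℕ → F) : ∑ b ∈ Finset.Icc 1 3, f b = f 1 + f 2 + f 3 := by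
  rw [show Finset.Icc 1 3 = {1, 2, 3} by decide]
  rw [Finset.sum_insert (by decide), Finset.sum_insert (by decide),
    Finset.sum_singleton, add_assoc]

/-- weights of the pure block-1 object (downloaded by the first failed node). -/
def wO1 : ℕ → Fin 2 → F := fun b _ => if b = 1 then 1 else 0

/-- weights of the mixed block-1/2 object. -/
def wO3 (g : F) : ℕ → Fin 2 → F := fun b ε =>
  if b = 1 then g ^ (ε : ℕ) else if b = 2 then 1 else 0

/-- weights of the plain block-2/3 object (downloaded by the second failed node). -/
def wP1 : ℕ → Fin 2 → F := fun b _ => if b = 2 then 1 else if b = 3 then 1 else 0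

/-- weights of the twisted block-2/3 object. -/
def wP2 (g : F) : ℕ → Fin 2 → F := fun b ε =>
  if b = 2 then g ^ (ε : ℕ) else if b = 3 then g ^ (1 - (ε : ℕ)) else 0

lemma sum_wO1 (ε : Fin 2) (f : ℕ → F) :
    ∑ b ∈ Finset.Icc 1 3, wO1 b ε * f b = f 1 := by
  rw [sumIcc13]; norm_num [wO1]

lemma sum_wO3 (g : F) (ε : Fin 2) (f : ℕ → F) :
    ∑ b ∈ Finset.Icc 1 3, wO3 g b ε * f b = g ^ (ε : ℕ) * f 1 + f 2 := by
  rw [sumIcc13]; norm_num [wO3]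

lemma sum_wP1 (ε : Fin 2) (f : ℕ → F) :
    ∑ b ∈ Finset.Icc 1 3, wP1 b ε * f b = f 2 + f 3 := by
  rw [sumIcc13]; norm_num [wP1]

lemma sum_wP2 (g : F) (ε : Fin 2) (f : ℕ → F) :
    ∑ b ∈ Finset.Icc 1 3, wP2 g b ε * f b
      = g ^ (ε : ℕ) * f 2 + g ^ (1 - (ε : ℕ)) * f 3 := by
  rw [sumIcc13]; norm_num [wP2]

lemma objValue_expand {n : ℕ} (ω : ℕ → Fin 2 → F) (x : Fin n)
    (base : Fin n → Fin 2) (cj : ℕ → (Fin n → Fin 2) → F) :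
    objValue ω x base cj
      = (∑ b ∈ Finset.Icc 1 3, ω b 0 * cj b (Function.update base x 0))
        + ∑ b ∈ Finset.Icc 1 3, ω b 1 * cj b (Function.update base x 1) := by
  rw [objValue, Fin.sum_univ_two]

/-- If the second failed node's downloads of `d` vanish, so does the message
it sends to the first. -/
lemma lemB {n k : ℕ} (lam : Fin n → Fin 2 → F)
    (hlam : Function.Injective fun p : Fin n × Fin 2 => lam p.1 p.2)
    (Rs : Finset (Fin n)) (hRcard : Rs.card = k + 1) (hkn : k + 3 ≤ n)
    (u₀ v₀ : Fin n) (huv : u₀ ≠ v₀) (hv : v₀ ∉ Rs) (g : F)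
    (d : Fin n → ℕ → (Fin n → Fin 2) → F) (hd : IsCodeword k 2 3 lam d)
    (hDv : ∀ j ∈ Rs, ∀ a : Fin n → Fin 2,
      objValue (if a v₀ = 0 then wP1 else wP2 g) v₀ a (d j) = 0) :
    ∀ a : Fin n → Fin 2,
      objValue (if a v₀ = 0 then wP1 else wP2 g) v₀ a (d u₀) = 0 := fun a =>
  (obj lam hlam Rs hRcard hkn d hd v₀ hv a _ (fun j hj => hDv j hj a)).2 u₀ huv

/-- If the first failed node's downloads of `d` vanish, so does the message
it sends to the second. -/
lemma lemB' {n k : ℕ} (lam : Fin n → Fin 2 → F)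
    (hlam : Function.Injective fun p : Fin n × Fin 2 => lam p.1 p.2)
    (Rs : Finset (Fin n)) (hRcard : Rs.card = k + 1) (hkn : k + 3 ≤ n)
    (u₀ v₀ : Fin n) (huv : u₀ ≠ v₀) (hu : u₀ ∉ Rs) (g : F)
    (d : Fin n → ℕ → (Fin n → Fin 2) → F) (hd : IsCodeword k 2 3 lam d)
    (hDu : ∀ j ∈ Rs, ∀ a : Fin n → Fin 2,
      objValue (if a u₀ = 0 then wO1 else wO3 g) u₀ a (d j) = 0) :
    ∀ a : Fin n → Fin 2,
      objValue (if a u₀ = 0 then wO1 else wO3 g) u₀ a (d v₀) = 0 := fun a =>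
  (obj lam hlam Rs hRcard hkn d hd u₀ hu a _ (fun j hj => hDu j hj a)).2 v₀ huv.symm

/-- Recovery of the first failed node from vanishing data. -/
lemma lemA {n k : ℕ} (lam : Fin n → Fin 2 → F)
    (hlam : Function.Injective fun p : Fin n × Fin 2 => lam p.1 p.2)
    (Rs : Finset (Fin n)) (hRcard : Rs.card = k + 1) (hkn : k + 3 ≤ n)
    (u₀ v₀ : Fin n) (hu : u₀ ∉ Rs) (g : F) (hg1 : g ≠ 1)
    (d : Fin n → ℕ → (Fin n → Fin 2) → F) (hd : IsCodeword k 2 3 lam d)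
    (hDu : ∀ j ∈ Rs, ∀ a : Fin n → Fin 2,
      objValue (if a u₀ = 0 then wO1 else wO3 g) u₀ a (d j) = 0)
    (hEvu : ∀ a : Fin n → Fin 2,
      objValue (if a v₀ = 0 then wP1 else wP2 g) v₀ a (d u₀) = 0) :
    ∀ b ∈ Finset.Icc 1 3, ∀ a : Fin n → Fin 2, d u₀ b a = 0 := by
  have h1 : ∀ a : Fin n → Fin 2, d u₀ 1 a = 0 := by
    intro a
    have hz : ∀ j ∈ Rs, objValue wO1 u₀ a (d j) = 0 := by
      intro j hj
      have h := hDu j hj (Function.update a u₀ 0)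
      rw [if_pos (Function.update_self _ _ _), objValue_update_self] at h
      exact h
    have h := (obj lam hlam Rs hRcard hkn d hd u₀ hu a wO1 hz).1 (a u₀)
    rw [sum_wO1, Function.update_eq_self] at h
    exact h
  have h2 : ∀ a : Fin n → Fin 2, d u₀ 2 a = 0 := by
    intro a
    have hz : ∀ j ∈ Rs, objValue (wO3 g) u₀ a (d j) = 0 := by
      intro j hj
      have h := hDu j hj (Function.update a u₀ 1)
      rw [if_neg (by rw [Function.update_self]; decide), objValue_update_self] at h
      exact h
    have h := (obj lam hlam Rs hRcard hkn d hd u₀ hu a (wO3 g) hz).1 (a u₀)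
    rw [sum_wO3, Function.update_eq_self, h1 a, mul_zero, zero_add] at h
    exact h
  have h3 : ∀ a : Fin n → Fin 2, d u₀ 3 a = 0 := by
    intro a
    have e0 := hEvu (Function.update a v₀ 0)
    rw [if_pos (Function.update_self _ _ _), objValue_update_self,
      objValue_expand, sum_wP1, sum_wP1, h2, h2, zero_add, zero_add] at e0
    have e1 := hEvu (Function.update a v₀ 1)
    rw [if_neg (by rw [Function.update_self]; decide), objValue_update_self,
      objValue_expand, sum_wP2, sum_wP2, h2, h2, mul_zero, mul_zero, zero_add,
      zero_add] at e1
    norm_num at e1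
    have hx0 : d u₀ 3 (Function.update a v₀ 0) = 0 := by
      have hsub : (g - 1) * d u₀ 3 (Function.update a v₀ 0) = 0 := by
        linear_combination e1 - e0
      rcases mul_eq_zero.mp hsub with h | h
      · exact absurd (by linear_combination h) hg1
      · exact h
    have hx1 : d u₀ 3 (Function.update a v₀ 1) = 0 := by
      linear_combination e0 - hx0
    rcases fin2cases (a v₀) with hav | hav
    · have ha : Function.update a v₀ 0 = a := by rw [← hav, Function.update_eq_self]
      rwa [ha] at hx0
    · have ha : Function.update a v₀ 1 = a := by rw [← hav, Function.update_eq_self]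
      rwa [ha] at hx1
  intro b hb a
  rw [Finset.mem_Icc] at hb
  obtain ⟨hb1, hb3⟩ := hb
  interval_cases b
  · exact h1 a
  · exact h2 a
  · exact h3 a

/-- Recovery of the second failed node from vanishing data. -/
lemma lemA' {n k : ℕ} (lam : Fin n → Fin 2 → F)
    (hlam : Function.Injective fun p : Fin n × Fin 2 => lam p.1 p.2)
    (Rs : Finset (Fin n)) (hRcard : Rs.card = k + 1) (hkn : k + 3 ≤ n)
    (u₀ v₀ : Fin n) (hv : v₀ ∉ Rs) (g : F) (hg1 : g ≠ 1)
    (d : Fin n → ℕ → (Fin n → Fin 2) → F) (hd : IsCodeword k 2 3 lam d)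
    (hDv : ∀ j ∈ Rs, ∀ a : Fin n → Fin 2,
      objValue (if a v₀ = 0 then wP1 else wP2 g) v₀ a (d j) = 0)
    (hEuv : ∀ a : Fin n → Fin 2,
      objValue (if a u₀ = 0 then wO1 else wO3 g) u₀ a (d v₀) = 0) :
    ∀ b ∈ Finset.Icc 1 3, ∀ a : Fin n → Fin 2, d v₀ b a = 0 := by
  have h23 : ∀ a : Fin n → Fin 2, d v₀ 2 a = 0 ∧ d v₀ 3 a = 0 := by
    intro a
    have hz1 : ∀ j ∈ Rs, objValue wP1 v₀ a (d j) = 0 := by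
      intro j hj
      have h := hDv j hj (Function.update a v₀ 0)
      rw [if_pos (Function.update_self _ _ _), objValue_update_self] at h
      exact h
    have hz2 : ∀ j ∈ Rs, objValue (wP2 g) v₀ a (d j) = 0 := by
      intro j hj
      have h := hDv j hj (Function.update a v₀ 1)
      rw [if_neg (by rw [Function.update_self]; decide), objValue_update_self] at h
      exact h
    have hp1 := (obj lam hlam Rs hRcard hkn d hd v₀ hv a wP1 hz1).1 (a v₀)
    have hp2 := (obj lam hlam Rs hRcard hkn d hd v₀ hv a (wP2 g) hz2).1 (a v₀)
    rw [sum_wP1, Function.update_eq_self] at hp1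
    rw [sum_wP2, Function.update_eq_self] at hp2
    rcases fin2cases (a v₀) with hav | hav <;> rw [hav] at hp2 <;> norm_num at hp2
    · -- hp1 : d2 + d3 = 0, hp2 : d2 + g * d3 = 0
      have h3 : d v₀ 3 a = 0 := by
        have hsub : (g - 1) * d v₀ 3 a = 0 := by linear_combination hp2 - hp1
        rcases mul_eq_zero.mp hsub with h | h
        · exact absurd (by linear_combination h) hg1
        · exact h
      exact ⟨by linear_combination hp1 - h3, h3⟩
    · -- hp2 : g * d2 + d3 = 0
      have h2 : d v₀ 2 a = 0 := by
        have hsub : (g - 1) * d v₀ 2 a = 0 := by linear_combination hp2 - hp1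
        rcases mul_eq_zero.mp hsub with h | h
        · exact absurd (by linear_combination h) hg1
        · exact h
      exact ⟨h2, by linear_combination hp1 - h2⟩
  have h1 : ∀ a : Fin n → Fin 2, d v₀ 1 a = 0 := by
    intro a
    have e0 := hEuv (Function.update a u₀ 0)
    rw [if_pos (Function.update_self _ _ _), objValue_update_self,
      objValue_expand, sum_wO1, sum_wO1] at e0
    have e1 := hEuv (Function.update a u₀ 1)
    rw [if_neg (by rw [Function.update_self]; decide), objValue_update_self,
      objValue_expand, sum_wO3, sum_wO3,
      (h23 (Function.update a u₀ 0)).1, (h23 (Function.update a u₀ 1)).1] at e1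
    norm_num at e1
    have hx1 : d v₀ 1 (Function.update a u₀ 1) = 0 := by
      have hsub : (g - 1) * d v₀ 1 (Function.update a u₀ 1) = 0 := by
        linear_combination e1 - e0
      rcases mul_eq_zero.mp hsub with h | h
      · exact absurd (by linear_combination h) hg1
      · exact h
    have hx0 : d v₀ 1 (Function.update a u₀ 0) = 0 := by
      linear_combination e0 - hx1
    rcases fin2cases (a u₀) with hau | hau
    · have ha : Function.update a u₀ 0 = a := by rw [← hau, Function.update_eq_self]
      rwa [ha] at hx0
    · have ha : Function.update a u₀ 1 = a := by rw [← hau, Function.update_eq_self]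
      rwa [ha] at hx1
  intro b hb a
  rw [Finset.mem_Icc] at hb
  obtain ⟨hb1, hb3⟩ := hb
  interval_cases b
  · exact h1 a
  · exact (h23 a).1
  · exact (h23 a).2

lemma isCodeword_sub {n k : ℕ} (lam : Fin n → Fin 2 → F)
    (c₁ c₂ : Fin n → ℕ → (Fin n → Fin 2) → F)
    (h₁ : IsCodeword k 2 3 lam c₁) (h₂ : IsCodeword k 2 3 lam c₂) :
    IsCodeword k 2 3 lam (fun i b a => c₁ i b a - c₂ i b a) := by
  intro t ht b hb a
  simp only [mul_sub, Finset.sum_sub_distrib]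
  rw [h₁ t ht b hb a, h₂ t ht b hb a, sub_zero]

end Stmt5

/-- `C(n,k,2,3,λ)` is a `(2,k+1)`-MSR code under the cooperative
model.  For any two failed nodes `Fs` and any `k+1` helper nodes `Rs` there
exist first-round download functions `φ u j` (one message, i.e. one element of
`M = (Fin n → Fin 2) → F ≅ F^(2^n)`, sent from helper `j` to failed node `u`),
exchange functions `ψ u v` (one message of `M` computed by `u` from its
first-round downloads and sent to the other failed node `v`), and recovery
functions `ρ u`, such that every failed node recovers all of its coordinates
`(b,a)`, `b ∈ {1,2,3}`.  The total bandwidth, `2(k+1) + 2` messages of `2^n`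
field symbols each, meets the cooperative cut-set bound with equality. -/
theorem stmt_5 {F : Type*} [Field F] (n k : ℕ) (hk : 1 ≤ k) (hkn : k + 3 ≤ n)
    (lam : Fin n → Fin 2 → F)
    (hlam : Function.Injective fun p : Fin n × Fin 2 => lam p.1 p.2)
    (Fs Rs : Finset (Fin n)) (hdisj : Disjoint Fs Rs)
    (hFcard : Fs.card = 2) (hRcard : Rs.card = k + 1) :
    ∃ (φ : Fin n → Fin n → (ℕ → (Fin n → Fin 2) → F) → ((Fin n → Fin 2) → F))
      (ψ : Fin n → Fin n → ({j // j ∈ Rs} → (Fin n → Fin 2) → F) → ((Fin n → Fin 2) → F))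
      (ρ : (u : Fin n) → ({j // j ∈ Rs} → (Fin n → Fin 2) → F) →
            ({v // v ∈ Fs.erase u} → (Fin n → Fin 2) → F) → (ℕ → (Fin n → Fin 2) → F)),
      ∀ c : Fin n → ℕ → (Fin n → Fin 2) → F, IsCodeword k 2 3 lam c →
        ∀ u ∈ Fs, ∀ b ∈ Finset.Icc 1 3, ∀ a : Fin n → Fin 2,
          ρ u (fun j => φ u j.1 (c j.1))
              (fun v => ψ v.1 u (fun j => φ v.1 j.1 (c j.1))) b a
            = c u b a := by
  classical
  obtain ⟨u₀, v₀, huv, hFs⟩ := Finset.card_eq_two.mp hFcard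
  have hvu : v₀ ≠ u₀ := Ne.symm huv
  have hu₀F : u₀ ∈ Fs := by rw [hFs]; exact Finset.mem_insert_self _ _
  have hv₀F : v₀ ∈ Fs := by rw [hFs]; simp
  have hu : u₀ ∉ Rs := fun h => Finset.disjoint_left.mp hdisj hu₀F h
  have hv : v₀ ∉ Rs := fun h => Finset.disjoint_left.mp hdisj hv₀F h
  have hmemv : v₀ ∈ Fs.erase u₀ := Finset.mem_erase.mpr ⟨hvu, hv₀F⟩
  have hmemu : u₀ ∈ Fs.erase v₀ := Finset.mem_erase.mpr ⟨huv, hu₀F⟩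
  have huniq_v : ∀ w ∈ Fs.erase u₀, w = v₀ := by
    intro w hw
    rw [hFs] at hw
    rcases Finset.mem_erase.mp hw with ⟨hw1, hw2⟩
    simp only [Finset.mem_insert, Finset.mem_singleton] at hw2
    tauto
  have huniq_u : ∀ w ∈ Fs.erase v₀, w = u₀ := by
    intro w hw
    rw [hFs] at hw
    rcases Finset.mem_erase.mp hw with ⟨hw1, hw2⟩
    simp only [Finset.mem_insert, Finset.mem_singleton] at hw2
    tauto
  set φ₀ : Fin n → Fin n → (ℕ → (Fin n → Fin 2) → F) → ((Fin n → Fin 2) → F) :=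
    fun x _ cj a =>
      if x = u₀ then
        Stmt5.objValue (if a u₀ = 0 then Stmt5.wO1 else Stmt5.wO3 0) u₀ a cj
      else if x = v₀ then
        Stmt5.objValue (if a v₀ = 0 then Stmt5.wP1 else Stmt5.wP2 0) v₀ a cj
      else 0 with hφ₀
  set exM : Fin n → (Fin n → ℕ → (Fin n → Fin 2) → F) → ((Fin n → Fin 2) → F) :=
    fun y c a =>
      if y = u₀ then
        Stmt5.objValue (if a u₀ = 0 then Stmt5.wO1 else Stmt5.wO3 0) u₀ a (c v₀)
      else
        Stmt5.objValue (if a v₀ = 0 then Stmt5.wP1 else Stmt5.wP2 0) v₀ a (c u₀)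
    with hexM
  set ψ₀ : Fin n → Fin n → ({j // j ∈ Rs} → (Fin n → Fin 2) → F) → ((Fin n → Fin 2) → F) :=
    fun y _ D =>
      if h : ∃ c', IsCodeword k 2 3 lam c' ∧
          (fun j : {j // j ∈ Rs} => φ₀ y j.1 (c' j.1)) = D
      then exM y h.choose else 0 with hψ₀
  set ρ₀ : (u : Fin n) → ({j // j ∈ Rs} → (Fin n → Fin 2) → F) →
      ({v // v ∈ Fs.erase u} → (Fin n → Fin 2) → F) → (ℕ → (Fin n → Fin 2) → F) :=
    fun x D E =>
      if h : ∃ c', IsCodeword k 2 3 lam c' ∧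
          ((fun j : {j // j ∈ Rs} => φ₀ x j.1 (c' j.1)) = D ∧
            (fun v : {v // v ∈ Fs.erase x} => exM v.1 c') = E)
      then h.choose x else fun _ _ => 0 with hρ₀
  have hphiu : ∀ (j : Fin n) (cj : ℕ → (Fin n → Fin 2) → F) (a : Fin n → Fin 2),
      φ₀ u₀ j cj a
        = Stmt5.objValue (if a u₀ = 0 then Stmt5.wO1 else Stmt5.wO3 (0 : F)) u₀ a cj := by
    intro j cj a
    simp [hφ₀]
  have hphiv : ∀ (j : Fin n) (cj : ℕ → (Fin n → Fin 2) → F) (a : Fin n → Fin 2),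
      φ₀ v₀ j cj a
        = Stmt5.objValue (if a v₀ = 0 then Stmt5.wP1 else Stmt5.wP2 (0 : F)) v₀ a cj := by
    intro j cj a
    simp [hφ₀, hvu]
  have hexMu : ∀ (c : Fin n → ℕ → (Fin n → Fin 2) → F) (a : Fin n → Fin 2),
      exM u₀ c a
        = Stmt5.objValue (if a u₀ = 0 then Stmt5.wO1 else Stmt5.wO3 (0 : F)) u₀ a (c v₀) := by
    intro c a
    simp [hexM]
  have hexMv : ∀ (c : Fin n → ℕ → (Fin n → Fin 2) → F) (a : Fin n → Fin 2),
      exM v₀ c a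
        = Stmt5.objValue (if a v₀ = 0 then Stmt5.wP1 else Stmt5.wP2 (0 : F)) v₀ a (c u₀) := by
    intro c a
    simp [hexM, hvu]
  refine ⟨φ₀, ψ₀, ρ₀, ?_⟩
  intro c hc u huF b hb a
  -- message sent from v₀ to u₀ is correct
  have hψval : ψ₀ v₀ u₀ (fun j : {j // j ∈ Rs} => φ₀ v₀ j.1 (c j.1)) = exM v₀ c := by
    have hex : ∃ c', IsCodeword k 2 3 lam c' ∧
        (fun j : {j // j ∈ Rs} => φ₀ v₀ j.1 (c' j.1))
          = (fun j : {j // j ∈ Rs} => φ₀ v₀ j.1 (c j.1)) := ⟨c, hc, rfl⟩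
    simp only [hψ₀]
    rw [dif_pos hex]
    obtain ⟨hcw₁, hDeq⟩ := hex.choose_spec
    have hdcw := Stmt5.isCodeword_sub lam hex.choose c hcw₁ hc
    have hDv : ∀ j ∈ Rs, ∀ a' : Fin n → Fin 2,
        Stmt5.objValue (if a' v₀ = 0 then Stmt5.wP1 else Stmt5.wP2 (0 : F)) v₀ a'
          ((fun i b' a'' => hex.choose i b' a'' - c i b' a'') j) = 0 := by
      intro j hj a'
      rw [Stmt5.objValue_sub]
      have h := congrFun (congrFun hDeq ⟨j, hj⟩) a'
      rw [hphiv j (hex.choose j) a', hphiv j (c j) a'] at h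
      rw [h, sub_self]
    have hB := Stmt5.lemB lam hlam Rs hRcard hkn u₀ v₀ huv hv 0 _ hdcw hDv
    funext a'
    have h := hB a'
    rw [Stmt5.objValue_sub, sub_eq_zero] at h
    rw [hexMv hex.choose a', hexMv c a']
    exact h
  have hψval' : ψ₀ u₀ v₀ (fun j : {j // j ∈ Rs} => φ₀ u₀ j.1 (c j.1)) = exM u₀ c := by
    have hex : ∃ c', IsCodeword k 2 3 lam c' ∧
        (fun j : {j // j ∈ Rs} => φ₀ u₀ j.1 (c' j.1))
          = (fun j : {j // j ∈ Rs} => φ₀ u₀ j.1 (c j.1)) := ⟨c, hc, rfl⟩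
    simp only [hψ₀]
    rw [dif_pos hex]
    obtain ⟨hcw₁, hDeq⟩ := hex.choose_spec
    have hdcw := Stmt5.isCodeword_sub lam hex.choose c hcw₁ hc
    have hDu : ∀ j ∈ Rs, ∀ a' : Fin n → Fin 2,
        Stmt5.objValue (if a' u₀ = 0 then Stmt5.wO1 else Stmt5.wO3 (0 : F)) u₀ a'
          ((fun i b' a'' => hex.choose i b' a'' - c i b' a'') j) = 0 := by
      intro j hj a'
      rw [Stmt5.objValue_sub]
      have h := congrFun (congrFun hDeq ⟨j, hj⟩) a'
      rw [hphiu j (hex.choose j) a', hphiu j (c j) a'] at h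
      rw [h, sub_self]
    have hB := Stmt5.lemB' lam hlam Rs hRcard hkn u₀ v₀ huv hu 0 _ hdcw hDu
    funext a'
    have h := hB a'
    rw [Stmt5.objValue_sub, sub_eq_zero] at h
    rw [hexMu hex.choose a', hexMu c a']
    exact h
  have hcase : u = u₀ ∨ u = v₀ := by
    rw [hFs] at huF
    simpa using huF
  rcases hcase with hcu | hcu
  · -- recovery of u₀
    have hcu' := hcu.symm
    subst hcu' 
    have hEfun : (fun v : {v // v ∈ Fs.erase u₀} => exM v.1 c)
        = (fun v : {v // v ∈ Fs.erase u₀} =>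
            ψ₀ v.1 u₀ (fun j : {j // j ∈ Rs} => φ₀ v.1 j.1 (c j.1))) := by
      funext w
      obtain ⟨w, hw⟩ := w
      have hwv : w = v₀ := huniq_v w hw
      subst hwv
      exact hψval.symm
    have hex' : ∃ c', IsCodeword k 2 3 lam c' ∧
        ((fun j : {j // j ∈ Rs} => φ₀ u₀ j.1 (c' j.1))
            = (fun j : {j // j ∈ Rs} => φ₀ u₀ j.1 (c j.1)) ∧
          (fun v : {v // v ∈ Fs.erase u₀} => exM v.1 c')
            = (fun v : {v // v ∈ Fs.erase u₀} =>
                ψ₀ v.1 u₀ (fun j : {j // j ∈ Rs} => φ₀ v.1 j.1 (c j.1)))) :=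
      ⟨c, hc, rfl, hEfun⟩
    simp only [hρ₀]
    rw [dif_pos hex']
    obtain ⟨hcw₂, hDeq₂, hEeq₂⟩ := hex'.choose_spec
    have hdcw := Stmt5.isCodeword_sub lam hex'.choose c hcw₂ hc
    have hDu : ∀ j ∈ Rs, ∀ a' : Fin n → Fin 2,
        Stmt5.objValue (if a' u₀ = 0 then Stmt5.wO1 else Stmt5.wO3 (0 : F)) u₀ a'
          ((fun i b' a'' => hex'.choose i b' a'' - c i b' a'') j) = 0 := by
      intro j hj a'
      rw [Stmt5.objValue_sub]
      have h := congrFun (congrFun hDeq₂ ⟨j, hj⟩) a'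
      rw [hphiu j (hex'.choose j) a', hphiu j (c j) a'] at h
      rw [h, sub_self]
    have hEvu : ∀ a' : Fin n → Fin 2,
        Stmt5.objValue (if a' v₀ = 0 then Stmt5.wP1 else Stmt5.wP2 (0 : F)) v₀ a'
          ((fun i b' a'' => hex'.choose i b' a'' - c i b' a'') u₀) = 0 := by
      intro a'
      rw [Stmt5.objValue_sub]
      have h := congrFun (congrFun hEeq₂ ⟨v₀, hmemv⟩) a'
      rw [congrFun hψval a'] at h
      rw [hexMv hex'.choose a', hexMv c a'] at h
      rw [h, sub_self]
    have hA := Stmt5.lemA lam hlam Rs hRcard hkn u₀ v₀ hu 0 zero_ne_one _ hdcw hDu hEvu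
    have h := hA b hb a
    exact sub_eq_zero.mp h
  · -- recovery of v₀
    have hcu' := hcu.symm
    subst hcu' 
    have hEfun : (fun v : {v // v ∈ Fs.erase v₀} => exM v.1 c)
        = (fun v : {v // v ∈ Fs.erase v₀} =>
            ψ₀ v.1 v₀ (fun j : {j // j ∈ Rs} => φ₀ v.1 j.1 (c j.1))) := by
      funext w
      obtain ⟨w, hw⟩ := w
      have hwu : w = u₀ := huniq_u w hw
      subst hwu
      exact hψval'.symm
    have hex' : ∃ c', IsCodeword k 2 3 lam c' ∧
        ((fun j : {j // j ∈ Rs} => φ₀ v₀ j.1 (c' j.1))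
            = (fun j : {j // j ∈ Rs} => φ₀ v₀ j.1 (c j.1)) ∧
          (fun v : {v // v ∈ Fs.erase v₀} => exM v.1 c')
            = (fun v : {v // v ∈ Fs.erase v₀} =>
                ψ₀ v.1 v₀ (fun j : {j // j ∈ Rs} => φ₀ v.1 j.1 (c j.1)))) :=
      ⟨c, hc, rfl, hEfun⟩
    simp only [hρ₀]
    rw [dif_pos hex']
    obtain ⟨hcw₂, hDeq₂, hEeq₂⟩ := hex'.choose_spec
    have hdcw := Stmt5.isCodeword_sub lam hex'.choose c hcw₂ hc
    have hDv : ∀ j ∈ Rs, ∀ a' : Fin n → Fin 2,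
        Stmt5.objValue (if a' v₀ = 0 then Stmt5.wP1 else Stmt5.wP2 (0 : F)) v₀ a'
          ((fun i b' a'' => hex'.choose i b' a'' - c i b' a'') j) = 0 := by
      intro j hj a'
      rw [Stmt5.objValue_sub]
      have h := congrFun (congrFun hDeq₂ ⟨j, hj⟩) a'
      rw [hphiv j (hex'.choose j) a', hphiv j (c j) a'] at h
      rw [h, sub_self]
    have hEuv : ∀ a' : Fin n → Fin 2,
        Stmt5.objValue (if a' u₀ = 0 then Stmt5.wO1 else Stmt5.wO3 (0 : F)) u₀ a'
          ((fun i b' a'' => hex'.choose i b' a'' - c i b' a'') v₀) = 0 := by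
      intro a'
      rw [Stmt5.objValue_sub]
      have h := congrFun (congrFun hEeq₂ ⟨u₀, hmemu⟩) a'
      rw [congrFun hψval' a'] at h
      rw [hexMu hex'.choose a', hexMu c a'] at h
      rw [h, sub_self]
    have hA := Stmt5.lemA' lam hlam Rs hRcard hkn u₀ v₀ hv 0 zero_ne_one _ hdcw hDv hEuv
    have h := hA b hb a
    exact sub_eq_zero.mp h
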